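/- arXiv:2102.12163 — 4 statements merged into one kernel-verified Lean document; each statement's English description precedes it below -/
import Mathlib

section
/- Under the Harten heuristics assumption and continuity of the reference scheme with constant C_L = 1 + \tilde{C}_L, the additional error of the adaptive scheme satisfies: if \tilde{C}_L = 0 then \|F^n - \hat{f}^n\| \le C_{MR} (n+1) \epsilon for all n, and if \tilde{C}_L > 0 then \|F^n - \hat{f}^n\| \le C_{MR} \epsilon (1 + (e^{\tilde{C}_L n} - 1)/\tilde{C}_L). -/
/-- Additional error estimate for the adaptive MR-LBM scheme.
Under the Harten heuristics (H1) and continuity of the reference scheme with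
constant `C_L = 1 + C̃_L` (H2), the additional error satisfies
`‖F^n - f̂^n‖ ≤ C_MR (n+1) ε` if `C̃_L = 0` and
`‖F^n - f̂^n‖ ≤ C_MR ε (1 + (e^{C̃_L n} - 1)/C̃_L)` if `C̃_L > 0`. -/
theorem adaptive_scheme_error_estimate
    {V : Type*} [NormedAddCommGroup V] [NormedSpace ℝ V]
    (L : V → V) (A : ℕ → V → V)
    (CL CMR ε : ℝ) (hCL : 0 ≤ CL) (hCMR : 0 < CMR) (hε : 0 < ε)
    (hLip : ∀ F G : V, ‖L F - L G‖ ≤ (1 + CL) * ‖F - G‖)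
    (F f : ℕ → V)
    (hF : ∀ n, F (n + 1) = L (F n))
    (hf : ∀ n, f (n + 1) = A (n + 1) (L (f n)))
    (h0 : F 0 = f 0)
    (hHarten : ∀ n, ‖L (f n) - A (n + 1) (L (f n))‖ ≤ CMR * ε) :
    (CL = 0 → ∀ n : ℕ, ‖F n - f n‖ ≤ CMR * (n + 1) * ε) ∧
    (0 < CL → ∀ n : ℕ, ‖F n - f n‖ ≤ CMR * ε * (1 + (Real.exp (CL * n) - 1) / CL)) := by
  have key : ∀ n, ‖F (n + 1) - f (n + 1)‖ ≤ (1 + CL) * ‖F n - f n‖ + CMR * ε := by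
    intro n
    have h1 : F (n + 1) - f (n + 1)
        = (L (F n) - L (f n)) + (L (f n) - A (n + 1) (L (f n))) := by
      rw [hF n, hf n]; abel
    calc ‖F (n + 1) - f (n + 1)‖
        ≤ ‖L (F n) - L (f n)‖ + ‖L (f n) - A (n + 1) (L (f n))‖ := by
          rw [h1]; exact norm_add_le _ _
      _ ≤ (1 + CL) * ‖F n - f n‖ + CMR * ε :=
          add_le_add (hLip _ _) (hHarten n)
  constructor
  · intro hzero n
    induction n with
    | zero =>
        simp [h0]
        positivity
    | succ n ih =>
        have := key n
        rw [hzero] at this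
        push_cast
        calc ‖F (n + 1) - f (n + 1)‖ ≤ (1 + 0) * ‖F n - f n‖ + CMR * ε := this
          _ ≤ CMR * (n + 1) * ε + CMR * ε := by
              have : ‖F n - f n‖ ≤ CMR * (n + 1) * ε := ih
              nlinarith
          _ = CMR * (n + 1 + 1) * ε := by ring
  · intro hpos n
    -- first prove the geometric bound
    have geo : ∀ n : ℕ, ‖F n - f n‖ ≤ CMR * ε * (((1 + CL) ^ n - 1) / CL) := by
      intro n
      induction n with
      | zero => simp [h0]
      | succ n ih =>
          calc ‖F (n + 1) - f (n + 1)‖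
              ≤ (1 + CL) * ‖F n - f n‖ + CMR * ε := key n
            _ ≤ (1 + CL) * (CMR * ε * (((1 + CL) ^ n - 1) / CL)) + CMR * ε := by
                have h1 : (0:ℝ) < 1 + CL := by linarith
                nlinarith [mul_le_mul_of_nonneg_left ih (le_of_lt h1)]
            _ = CMR * ε * (((1 + CL) ^ (n + 1) - 1) / CL) := by
                field_simp
                ring
    have hexp : ((1 + CL) ^ n : ℝ) ≤ Real.exp (CL * n) := by
      have h1 : (1 + CL : ℝ) ≤ Real.exp CL := by
        have := Real.add_one_le_exp CL
        linarith
      calc ((1 + CL) ^ n : ℝ) ≤ (Real.exp CL) ^ n :=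
            pow_le_pow_left₀ (by linarith) h1 n
        _ = Real.exp (CL * n) := by
            rw [← Real.exp_nat_mul]; ring_nf
    calc ‖F n - f n‖ ≤ CMR * ε * (((1 + CL) ^ n - 1) / CL) := geo n
      _ ≤ CMR * ε * ((Real.exp (CL * n) - 1) / CL) := by
          apply mul_le_mul_of_nonneg_left _ (by positivity)
          apply div_le_div_of_nonneg_right (by linarith) hCL
      _ ≤ CMR * ε * (1 + (Real.exp (CL * n) - 1) / CL) := by
          have hE : 0 ≤ (Real.exp (CL * n) - 1) / CL := by
            apply div_nonneg _ hCL
            have : (1:ℝ) ≤ Real.exp (CL * n) := Real.one_le_exp (by positivity)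
            linarith
          nlinarith
end

section
/- For the D1Q2 lattice Boltzmann scheme for linear advection with velocity c, 0 < c \le \lambda, relaxation parameter s \in (0,2], equilibrium M^{1,eq} = c M^0, the one-time-step operator L is nonexpansive for the weighted \ell^1 norm (continuity constant C_L = 1) whenever s \le 2/(1 + c/\lambda). -/
open scoped BigOperators

/-- Collision phase of the D1Q2 scheme for linear advection: with moments
`M⁰ = F⁰ + F¹`, `M¹ = λ(F⁰ - F¹)`, relax `M¹* = (1-s)M¹ + s c M⁰` (and `M⁰* = M⁰`),
then return to populations. -/
noncomputable def d1q2Collide {N : ℕ} (lam c s : ℝ)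
    (F : (ZMod N → ℝ) × (ZMod N → ℝ)) : (ZMod N → ℝ) × (ZMod N → ℝ) :=
  (fun k => ((F.1 k + F.2 k) + ((1 - s) * (lam * (F.1 k - F.2 k)) + s * c * (F.1 k + F.2 k)) / lam) / 2,
   fun k => ((F.1 k + F.2 k) - ((1 - s) * (lam * (F.1 k - F.2 k)) + s * c * (F.1 k + F.2 k)) / lam) / 2)

/-- One full time step of the D1Q2 scheme on a periodic lattice of `N` cells:
collision followed by streaming `F⁰ₖ ← F⁰*ₖ₋₁`, `F¹ₖ ← F¹*ₖ₊₁`. -/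
noncomputable def d1q2Step {N : ℕ} (lam c s : ℝ)
    (F : (ZMod N → ℝ) × (ZMod N → ℝ)) : (ZMod N → ℝ) × (ZMod N → ℝ) :=
  (fun k => (d1q2Collide lam c s F).1 (k - 1),
   fun k => (d1q2Collide lam c s F).2 (k + 1))

private lemma collide_diff1 (lam c s x y X Y : ℝ) (hlam : lam ≠ 0) :
    ((x + y) + ((1 - s) * (lam * (x - y)) + s * c * (x + y)) / lam) / 2
      - (((X + Y) + ((1 - s) * (lam * (X - Y)) + s * c * (X + Y)) / lam) / 2)
    = (1 - s * (lam - c) / (2 * lam)) * (x - X)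
      + (s * (lam + c) / (2 * lam)) * (y - Y) := by
  field_simp
  ring

private lemma collide_diff2 (lam c s x y X Y : ℝ) (hlam : lam ≠ 0) :
    ((x + y) - ((1 - s) * (lam * (x - y)) + s * c * (x + y)) / lam) / 2
      - (((X + Y) - ((1 - s) * (lam * (X - Y)) + s * c * (X + Y)) / lam) / 2)
    = (s * (lam - c) / (2 * lam)) * (x - X)
      + (1 - s * (lam + c) / (2 * lam)) * (y - Y) := by
  field_simp
  ring

/-- for the D1Q2 scheme for linear advection with `0 < c ≤ λ` and
`s ∈ (0,2]`, the one-step operator is nonexpansive for the weighted `ℓ¹` norm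
(continuity constant `C_L = 1`) whenever `s ≤ 2/(1 + c/λ)`. -/
theorem d1q2_nonexpansive_l1
    (N : ℕ) [NeZero N] (lam c s Δx : ℝ)
    (hΔx : 0 < Δx) (hc : 0 < c) (hcl : c ≤ lam)
    (hs0 : 0 < s) (hs2 : s ≤ 2)
    (hs : s ≤ 2 / (1 + c / lam)) :
    ∀ F G : (ZMod N → ℝ) × (ZMod N → ℝ),
      Δx * ∑ k : ZMod N,
          (|(d1q2Step lam c s F).1 k - (d1q2Step lam c s G).1 k| +
           |(d1q2Step lam c s F).2 k - (d1q2Step lam c s G).2 k|)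
        ≤ Δx * ∑ k : ZMod N, (|F.1 k - G.1 k| + |F.2 k - G.2 k|) := by
  intro F G
  have hlam : (0 : ℝ) < lam := lt_of_lt_of_le hc hcl
  have hlam' : lam ≠ 0 := ne_of_gt hlam
  set a1 : ℝ := 1 - s * (lam - c) / (2 * lam) with ha1
  set a2 : ℝ := s * (lam - c) / (2 * lam) with ha2
  set b1 : ℝ := s * (lam + c) / (2 * lam) with hb1
  set b2 : ℝ := 1 - s * (lam + c) / (2 * lam) with hb2
  have ha2nn : 0 ≤ a2 := by
    apply div_nonneg
    · exact mul_nonneg hs0.le (by linarith)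
    · linarith
  have ha1nn : 0 ≤ a1 := by
    have h1 : s * (lam - c) ≤ 2 * lam := by nlinarith
    rw [ha1, sub_nonneg, div_le_one (by linarith)]
    exact h1
  have hb1nn : 0 ≤ b1 := by
    apply div_nonneg
    · exact mul_nonneg hs0.le (by linarith)
    · linarith
  have hb2nn : 0 ≤ b2 := by
    have hcl' : 0 < 1 + c / lam := by positivity
    have h1 : s * (1 + c / lam) ≤ 2 := by
      calc s * (1 + c / lam) ≤ (2 / (1 + c / lam)) * (1 + c / lam) :=
            mul_le_mul_of_nonneg_right hs hcl'.le
        _ = 2 := div_mul_cancel₀ 2 (ne_of_gt hcl')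
    have h2 : s * (lam + c) ≤ 2 * lam := by
      have := mul_le_mul_of_nonneg_right h1 hlam.le
      calc s * (lam + c) = s * (1 + c / lam) * lam := by field_simp
        _ ≤ 2 * lam := this
    rw [hb2, sub_nonneg, div_le_one (by linarith)]
    exact h2
  have hsuma : a1 + a2 = 1 := by rw [ha1, ha2]; ring
  have hsumb : b1 + b2 = 1 := by rw [hb1, hb2]; ring
  -- rewrite the step sums
  apply mul_le_mul_of_nonneg_left _ hΔx.le
  have hshift1 : (∑ k : ZMod N,
      |(d1q2Step lam c s F).1 k - (d1q2Step lam c s G).1 k|)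
      = ∑ k : ZMod N,
        |(d1q2Collide lam c s F).1 k - (d1q2Collide lam c s G).1 k| := by
    exact Fintype.sum_equiv (Equiv.subRight (1 : ZMod N)) _ _ (fun k => rfl)
  have hshift2 : (∑ k : ZMod N,
      |(d1q2Step lam c s F).2 k - (d1q2Step lam c s G).2 k|)
      = ∑ k : ZMod N,
        |(d1q2Collide lam c s F).2 k - (d1q2Collide lam c s G).2 k| := by
    exact Fintype.sum_equiv (Equiv.addRight (1 : ZMod N)) _ _ (fun k => rfl)
  calc ∑ k : ZMod N,
        (|(d1q2Step lam c s F).1 k - (d1q2Step lam c s G).1 k| +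
         |(d1q2Step lam c s F).2 k - (d1q2Step lam c s G).2 k|)
      = ∑ k : ZMod N,
        (|(d1q2Collide lam c s F).1 k - (d1q2Collide lam c s G).1 k| +
         |(d1q2Collide lam c s F).2 k - (d1q2Collide lam c s G).2 k|) := by
        rw [Finset.sum_add_distrib, Finset.sum_add_distrib, hshift1, hshift2]
    _ ≤ ∑ k : ZMod N, (|F.1 k - G.1 k| + |F.2 k - G.2 k|) := by
        apply Finset.sum_le_sum
        intro k _
        have e1 : (d1q2Collide lam c s F).1 k - (d1q2Collide lam c s G).1 k
            = a1 * (F.1 k - G.1 k) + b1 * (F.2 k - G.2 k) := by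
          simpa [d1q2Collide, ha1, hb1] using
            collide_diff1 lam c s (F.1 k) (F.2 k) (G.1 k) (G.2 k) hlam'
        have e2 : (d1q2Collide lam c s F).2 k - (d1q2Collide lam c s G).2 k
            = a2 * (F.1 k - G.1 k) + b2 * (F.2 k - G.2 k) := by
          simpa [d1q2Collide, ha2, hb2] using
            collide_diff2 lam c s (F.1 k) (F.2 k) (G.1 k) (G.2 k) hlam'
        rw [e1, e2]
        set u := F.1 k - G.1 k
        set v := F.2 k - G.2 k
        calc |a1 * u + b1 * v| + |a2 * u + b2 * v|
            ≤ (|a1 * u| + |b1 * v|) + (|a2 * u| + |b2 * v|) :=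
              add_le_add (abs_add_le _ _) (abs_add_le _ _)
          _ = (a1 + a2) * |u| + (b1 + b2) * |v| := by
              rw [abs_mul, abs_mul, abs_mul, abs_mul,
                abs_of_nonneg ha1nn, abs_of_nonneg ha2nn,
                abs_of_nonneg hb1nn, abs_of_nonneg hb2nn]
              ring
          _ = |u| + |v| := by rw [hsuma, hsumb, one_mul, one_mul]
end

section
/- For the D1Q2 lattice Boltzmann scheme for linear advection with 0 < c \le \lambda, relaxation s \in (0,2], when s > 2/(1 + c/\lambda) the operator norm of the one-step scheme operator in the weighted \ell^1 norm equals s(1 + c/\lambda) - 1. -/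
open scoped BigOperators

/-- for the D1Q2 scheme for linear advection with `0 < c ≤ λ`,
`s ∈ (0,2]` and `s > 2/(1 + c/λ)`, the operator norm of the one-step scheme
operator in the weighted `ℓ¹` norm (i.e. its least Lipschitz constant) equals
`s(1 + c/λ) - 1`. -/
theorem d1q2_operator_norm_l1
    (N : ℕ) [NeZero N] (lam c s Δx : ℝ)
    (hΔx : 0 < Δx) (hc : 0 < c) (hcl : c ≤ lam)
    (hs0 : 0 < s) (hs2 : s ≤ 2)
    (hs : 2 / (1 + c / lam) < s) :
    IsLeast {C : ℝ | 0 ≤ C ∧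
        ∀ F G : (ZMod N → ℝ) × (ZMod N → ℝ),
          Δx * ∑ k : ZMod N,
              (|(d1q2Step lam c s F).1 k - (d1q2Step lam c s G).1 k| +
               |(d1q2Step lam c s F).2 k - (d1q2Step lam c s G).2 k|)
            ≤ C * (Δx * ∑ k : ZMod N, (|F.1 k - G.1 k| + |F.2 k - G.2 k|))}
      (s * (1 + c / lam) - 1) := by
  have hlam : 0 < lam := lt_of_lt_of_le hc hcl
  have hlamne : lam ≠ 0 := ne_of_gt hlam
  have hr0 : 0 < c / lam := div_pos hc hlam
  have hr1 : c / lam ≤ 1 := (div_le_one hlam).mpr hcl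
  have h1r : (0:ℝ) < 1 + c / lam := by linarith
  have hsr : 2 < s * (1 + c / lam) := by
    rw [div_lt_iff₀ h1r] at hs; linarith
  -- pointwise collide difference formulas
  have hcol1 : ∀ (F G : (ZMod N → ℝ) × (ZMod N → ℝ)) (k : ZMod N),
      (d1q2Collide lam c s F).1 k - (d1q2Collide lam c s G).1 k
        = ((2 - s * (1 - c / lam)) * (F.1 k - G.1 k)
            + (s * (1 + c / lam)) * (F.2 k - G.2 k)) / 2 := by
    intro F G k
    simp only [d1q2Collide]
    field_simp
    ring
  have hcol2 : ∀ (F G : (ZMod N → ℝ) × (ZMod N → ℝ)) (k : ZMod N),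
      (d1q2Collide lam c s F).2 k - (d1q2Collide lam c s G).2 k
        = ((s * (1 - c / lam)) * (F.1 k - G.1 k)
            + (2 - s * (1 + c / lam)) * (F.2 k - G.2 k)) / 2 := by
    intro F G k
    simp only [d1q2Collide]
    field_simp
    ring
  have habs : ∀ (p q a b : ℝ), |(p * a + q * b) / 2| ≤ (|p| * |a| + |q| * |b|) / 2 := by
    intro p q a b
    rw [abs_div, abs_two, ← abs_mul, ← abs_mul]
    gcongr
    exact abs_add_le _ _
  have key : ∀ a b : ℝ,
      |((2 - s * (1 - c / lam)) * a + (s * (1 + c / lam)) * b) / 2|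
        + |((s * (1 - c / lam)) * a + (2 - s * (1 + c / lam)) * b) / 2|
        ≤ (s * (1 + c / lam) - 1) * (|a| + |b|) := by
    intro a b
    have e1 := habs (2 - s * (1 - c / lam)) (s * (1 + c / lam)) a b
    have e2 := habs (s * (1 - c / lam)) (2 - s * (1 + c / lam)) a b
    have c1 : (0:ℝ) ≤ s * (1 - c / lam) := mul_nonneg hs0.le (by linarith)
    have c2 : (0:ℝ) ≤ 2 - s * (1 - c / lam) := by nlinarith
    have c3 : (0:ℝ) ≤ s * (1 + c / lam) := by linarith
    rw [abs_of_nonneg c2, abs_of_nonneg c3] at e1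
    rw [abs_of_nonneg c1, abs_of_nonpos (by linarith : 2 - s * (1 + c / lam) ≤ 0)] at e2
    have ha := abs_nonneg a
    have hb := abs_nonneg b
    nlinarith [mul_nonneg (by linarith : (0:ℝ) ≤ s * (1 + c / lam) - 2) ha]
  have shiftm : ∀ f : ZMod N → ℝ, ∑ k : ZMod N, f (k - 1) = ∑ k : ZMod N, f k := by
    intro f
    exact Fintype.sum_equiv (Equiv.subRight (1 : ZMod N)) _ _ (fun k => rfl)
  have shiftp : ∀ f : ZMod N → ℝ, ∑ k : ZMod N, f (k + 1) = ∑ k : ZMod N, f k := by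
    intro f
    exact Fintype.sum_equiv (Equiv.addRight (1 : ZMod N)) _ _ (fun k => rfl)
  have stepsum : ∀ F G : (ZMod N → ℝ) × (ZMod N → ℝ),
      ∑ k : ZMod N,
          (|(d1q2Step lam c s F).1 k - (d1q2Step lam c s G).1 k| +
           |(d1q2Step lam c s F).2 k - (d1q2Step lam c s G).2 k|)
      = ∑ k : ZMod N,
          (|(d1q2Collide lam c s F).1 k - (d1q2Collide lam c s G).1 k| +
           |(d1q2Collide lam c s F).2 k - (d1q2Collide lam c s G).2 k|) := by
    intro F G
    simp only [d1q2Step]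
    rw [Finset.sum_add_distrib, Finset.sum_add_distrib]
    congr 1
    · exact shiftm (fun k => |(d1q2Collide lam c s F).1 k - (d1q2Collide lam c s G).1 k|)
    · exact shiftp (fun k => |(d1q2Collide lam c s F).2 k - (d1q2Collide lam c s G).2 k|)
  constructor
  · refine ⟨by linarith, ?_⟩
    intro F G
    rw [stepsum F G]
    have hsum : ∑ k : ZMod N,
          (|(d1q2Collide lam c s F).1 k - (d1q2Collide lam c s G).1 k| +
           |(d1q2Collide lam c s F).2 k - (d1q2Collide lam c s G).2 k|)
        ≤ (s * (1 + c / lam) - 1) * ∑ k : ZMod N, (|F.1 k - G.1 k| + |F.2 k - G.2 k|) := by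
      rw [Finset.mul_sum]
      apply Finset.sum_le_sum
      intro k _
      rw [hcol1 F G k, hcol2 F G k]
      exact key _ _
    calc Δx * ∑ k : ZMod N,
          (|(d1q2Collide lam c s F).1 k - (d1q2Collide lam c s G).1 k| +
           |(d1q2Collide lam c s F).2 k - (d1q2Collide lam c s G).2 k|)
        ≤ Δx * ((s * (1 + c / lam) - 1) * ∑ k : ZMod N, (|F.1 k - G.1 k| + |F.2 k - G.2 k|)) :=
          mul_le_mul_of_nonneg_left hsum hΔx.le
      _ = (s * (1 + c / lam) - 1) * (Δx * ∑ k : ZMod N, (|F.1 k - G.1 k| + |F.2 k - G.2 k|)) := by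
          ring
  · rintro C' ⟨hC'0, hC'⟩
    have h := hC' (fun _ => 0, fun k => if k = 0 then 1 else 0) (fun _ => 0, fun _ => 0)
    rw [stepsum] at h
    have hsum1 : ∑ k : ZMod N,
        (|(d1q2Collide lam c s (fun _ => 0, fun k => if k = 0 then 1 else 0)).1 k -
            (d1q2Collide lam c s ((fun _ => 0 : ZMod N → ℝ), (fun _ => 0 : ZMod N → ℝ))).1 k| +
         |(d1q2Collide lam c s (fun _ => 0, fun k => if k = 0 then 1 else 0)).2 k -
            (d1q2Collide lam c s ((fun _ => 0 : ZMod N → ℝ), (fun _ => 0 : ZMod N → ℝ))).2 k|)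
        = s * (1 + c / lam) - 1 := by
      have hpt : ∀ k : ZMod N,
          (|(d1q2Collide lam c s (fun _ => 0, fun k => if k = 0 then 1 else 0)).1 k -
              (d1q2Collide lam c s ((fun _ => 0 : ZMod N → ℝ), (fun _ => 0 : ZMod N → ℝ))).1 k| +
           |(d1q2Collide lam c s (fun _ => 0, fun k => if k = 0 then 1 else 0)).2 k -
              (d1q2Collide lam c s ((fun _ => 0 : ZMod N → ℝ), (fun _ => 0 : ZMod N → ℝ))).2 k|)
          = if k = 0 then s * (1 + c / lam) - 1 else 0 := by
        intro k
        rw [hcol1, hcol2]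
        by_cases hk : k = 0
        · simp only [hk, if_true, eq_self_iff_true]
          have e1 : ((2 - s * (1 - c / lam)) * ((0:ℝ) - 0)
              + (s * (1 + c / lam)) * ((1:ℝ) - 0)) / 2 = s * (1 + c / lam) / 2 := by ring
          have e2 : ((s * (1 - c / lam)) * ((0:ℝ) - 0)
              + (2 - s * (1 + c / lam)) * ((1:ℝ) - 0)) / 2 = (2 - s * (1 + c / lam)) / 2 := by ring
          rw [e1, e2, abs_of_nonneg (by linarith : (0:ℝ) ≤ s * (1 + c / lam) / 2),
            abs_of_nonpos (by linarith : (2 - s * (1 + c / lam)) / 2 ≤ 0)]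
          ring
        · simp [hk]
      rw [Finset.sum_congr rfl (fun k _ => hpt k)]
      simp
    simp only [hsum1] at h
    have hsum2 : ∑ x : ZMod N,
        (|(0:ℝ) - 0| + |(if x = 0 then (1:ℝ) else 0) - 0|) = 1 := by
      simp [apply_ite abs]
    rw [hsum2] at h
    nlinarith [h]
end

section
/- Thresholding error bound: let u be fine-level data with multiresolution decomposition (coarse averages, details d_{j,k}), and define the truncated data T u by setting to zero all details with |d_{j,k}| < \epsilon_j = 2^{j-\bar{J}}\epsilon. For the trivial prediction operator (\gamma = 0, \hat{f}_{j+1,2k+\delta} = f_{j,k}, the Haar case), the reconstructed fine-level data satisfies \|u - T u\|_{\ell^\infty} \le \sum_{j=\underline{J}+1}^{\bar{J}} \epsilon_j \le 2\epsilon. -/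
open scoped BigOperators

/-- Haar (γ = 0) multiresolution reconstruction from coarse averages `c` and
details `d`: `f_{i+1,2k} = f_{i,k} + d_{i,k}` and `f_{i+1,2k+1} = f_{i,k} - d_{i,k}`.
`haarRecon c d i m` is the value at position `m` after climbing `i` levels. -/
noncomputable def haarRecon (c : ℤ → ℝ) (d : ℕ → ℤ → ℝ) : ℕ → ℤ → ℝ
  | 0, m => c m
  | i + 1, m =>
      haarRecon c d i (Int.fdiv m 2) +
        (if m % 2 = 0 then (1 : ℝ) else -1) * d i (Int.fdiv m 2)

/-- thresholding error bound for the Haar case. Truncating to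
zero all details with `|d_{j,k}| < ε_j = 2^{j-J̄} ε` changes the reconstructed
finest-level data by at most `Σ_j ε_j ≤ 2ε` in the `ℓ^∞` norm. Here the `L`
intermediate levels are indexed by `i = 0,…,L-1`, level `i` carrying the
threshold `ε_{J̲+i+1} = 2^{(i+1)-L} ε`. -/
theorem haar_thresholding_error_bound
    (ε : ℝ) (hε : 0 < ε) (L : ℕ)
    (c : ℤ → ℝ) (d d' : ℕ → ℤ → ℝ)
    (hd' : ∀ i k, d' i k =
      if |d i k| < 2 ^ (((i : ℝ) + 1) - L) * ε then 0 else d i k) :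
    (∀ m : ℤ, |haarRecon c d L m - haarRecon c d' L m|
        ≤ ∑ i ∈ Finset.range L, 2 ^ (((i : ℝ) + 1) - L) * ε) ∧
    (∑ i ∈ Finset.range L, 2 ^ (((i : ℝ) + 1) - L) * ε) ≤ 2 * ε := by
  constructor
  · have key : ∀ i : ℕ, ∀ m : ℤ, |haarRecon c d i m - haarRecon c d' i m|
        ≤ ∑ j ∈ Finset.range i, 2 ^ (((j : ℝ) + 1) - L) * ε := by
      intro i
      induction i with
      | zero => intro m; simp [haarRecon]
      | succ i ih =>
        intro m
        have hdiff : |d i (Int.fdiv m 2) - d' i (Int.fdiv m 2)|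
            ≤ 2 ^ (((i : ℝ) + 1) - L) * ε := by
          rw [hd' i (Int.fdiv m 2)]
          split_ifs with h
          · simpa using h.le
          · simp
            positivity
        have hs : |(if m % 2 = 0 then (1 : ℝ) else -1)| = 1 := by
          split_ifs <;> simp
        calc |haarRecon c d (i+1) m - haarRecon c d' (i+1) m|
            = |(haarRecon c d i (Int.fdiv m 2) - haarRecon c d' i (Int.fdiv m 2))
              + (if m % 2 = 0 then (1 : ℝ) else -1)
                * (d i (Int.fdiv m 2) - d' i (Int.fdiv m 2))| := by
              simp only [haarRecon]; ring_nf
          _ ≤ |haarRecon c d i (Int.fdiv m 2) - haarRecon c d' i (Int.fdiv m 2)|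
              + |(if m % 2 = 0 then (1 : ℝ) else -1)
                * (d i (Int.fdiv m 2) - d' i (Int.fdiv m 2))| := abs_add_le _ _
          _ ≤ (∑ j ∈ Finset.range i, 2 ^ (((j : ℝ) + 1) - L) * ε)
              + 2 ^ (((i : ℝ) + 1) - L) * ε := by
              gcongr ?_ + ?_
              · exact ih _
              · rw [abs_mul, hs, one_mul]; exact hdiff
          _ = ∑ j ∈ Finset.range (i+1), 2 ^ (((j : ℝ) + 1) - L) * ε := by
              rw [Finset.sum_range_succ]
    exact key L
  · have hrw : ∀ i ∈ Finset.range L, (2:ℝ) ^ (((i : ℝ) + 1) - L) * ε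
        = ((2:ℝ) ^ ((1:ℝ) - L) * ε) * (2:ℝ) ^ i := by
      intro i _
      rw [show ((i : ℝ) + 1) - L = (i : ℝ) + ((1:ℝ) - L) by ring,
        Real.rpow_add (by norm_num), Real.rpow_natCast]
      ring
    rw [Finset.sum_congr rfl hrw, ← Finset.mul_sum, geom_sum_eq (by norm_num)]
    have h1 : (2:ℝ) ^ ((1:ℝ) - L) = 2 / 2 ^ L := by
      rw [Real.rpow_sub (by norm_num), Real.rpow_one, Real.rpow_natCast]
    rw [h1]
    have h2 : (0:ℝ) < 2 ^ L := by positivity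
    rw [div_mul_eq_mul_div, div_mul_eq_mul_div, div_le_iff₀ h2]
    have : (2:ℝ) ^ L - 1 ≤ 2 ^ L := by linarith
    nlinarith [this, hε.le, h2]
end
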